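/- There exists a constant c < ∞ such that for all 0 < r ≤ 1 and all 0 ≤ x ≤ π, A(r,x) ≤ (c/r²) · exp( −(2π/r)·(π − x) ). -/

import Mathlib

open Real

/-- The annulus function
`A(r,x) = (π²/(4r²)) ∑_{k ≠ 0} cosh(πx/(2r))² / (sinh(π²k/r)² cosh(π(x-2πk)/(2r))²)`. -/
noncomputable def Afun (r x : ℝ) : ℝ :=
  (π ^ 2 / (4 * r ^ 2)) * ∑' k : {k : ℤ // k ≠ 0},
    (Real.cosh (π * x / (2 * r))) ^ 2 /
      ((Real.sinh (π ^ 2 * ((k : ℤ) : ℝ) / r)) ^ 2 *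
        (Real.cosh (π * (x - 2 * π * ((k : ℤ) : ℝ)) / (2 * r))) ^ 2)

set_option maxHeartbeats 1000000

lemma cosh_le_exp_abs (y : ℝ) : Real.cosh y ≤ Real.exp |y| := by
  rw [Real.cosh_eq]
  have h1 : Real.exp y ≤ Real.exp |y| := Real.exp_le_exp.2 (le_abs_self y)
  have h2 : Real.exp (-y) ≤ Real.exp |y| := Real.exp_le_exp.2 (neg_le_abs y)
  linarith

lemma exp_abs_le_two_cosh (y : ℝ) : Real.exp |y| ≤ 2 * Real.cosh y := by
  rw [Real.cosh_eq]
  rcases abs_cases y with ⟨h, _⟩ | ⟨h, _⟩ <;> rw [h] <;>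
    nlinarith [Real.exp_pos y, Real.exp_pos (-y)]

lemma exp_le_four_sinh {y : ℝ} (hy : 1 ≤ y) : Real.exp y ≤ 4 * Real.sinh y := by
  rw [Real.sinh_eq]
  have h2 : (2:ℝ) ≤ Real.exp y := by nlinarith [Real.add_one_le_exp y]
  have h3 : Real.exp (-y) * Real.exp y = 1 := by rw [← Real.exp_add]; simp
  nlinarith [Real.exp_pos (-y)]

lemma frac_bound {u v w : ℝ} (hu : 0 ≤ u) (hv : 1 ≤ v) :
    (Real.cosh u) ^ 2 / ((Real.sinh v) ^ 2 * (Real.cosh w) ^ 2) ≤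
      64 * Real.exp (2 * (u - v - |w|)) := by
  have h1 : Real.cosh u ≤ Real.exp u := by
    simpa [abs_of_nonneg hu] using cosh_le_exp_abs u
  have h2 : Real.exp v / 4 ≤ Real.sinh v := by linarith [exp_le_four_sinh hv]
  have h3 : Real.exp |w| / 2 ≤ Real.cosh w := by linarith [exp_abs_le_two_cosh w]
  have hsq : (Real.exp v / 4) ^ 2 * (Real.exp |w| / 2) ^ 2 ≤
      (Real.sinh v) ^ 2 * (Real.cosh w) ^ 2 := by
    apply mul_le_mul (pow_le_pow_left₀ (by positivity) h2 2)
      (pow_le_pow_left₀ (by positivity) h3 2) (by positivity) (by positivity)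
  calc (Real.cosh u) ^ 2 / ((Real.sinh v) ^ 2 * (Real.cosh w) ^ 2)
      ≤ (Real.exp u) ^ 2 / ((Real.exp v / 4) ^ 2 * (Real.exp |w| / 2) ^ 2) :=
        div_le_div₀ (by positivity)
          (pow_le_pow_left₀ (Real.cosh_pos u).le h1 2) (by positivity) hsq
    _ = 64 * Real.exp (2 * (u - v - |w|)) := by
        have e2 : ∀ a : ℝ, Real.exp a ^ 2 = Real.exp (2 * a) := by
          intro a; rw [show (2:ℝ)*a = a + a by ring, Real.exp_add]; ring
        rw [div_pow, div_pow, e2, e2, show (2:ℝ) * (u - v - |w|) = 2*u - 2*v - 2*|w| by ring,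
          Real.exp_sub, Real.exp_sub, e2]
        field_simp
        ring

lemma term_bound {r x : ℝ} (hr : 0 < r) (hr1 : r ≤ 1) (hx : 0 ≤ x) (hxπ : x ≤ π)
    {k : ℤ} (hk : k ≠ 0) :
    (Real.cosh (π * x / (2 * r))) ^ 2 /
      ((Real.sinh (π ^ 2 * (k : ℝ) / r)) ^ 2 *
        (Real.cosh (π * (x - 2 * π * (k : ℝ)) / (2 * r))) ^ 2) ≤
    64 * Real.exp (2 * π ^ 2) * Real.exp (-(2 * π / r) * (π - x)) *
      Real.exp (-(4 * π ^ 2)) ^ k.natAbs := by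
  have hπ := Real.pi_gt_three
  set n : ℕ := k.natAbs with hn
  have hn0 : 0 < n := Int.natAbs_pos.mpr hk
  have hn1 : (1:ℝ) ≤ (n:ℝ) := by exact_mod_cast hn0
  have hπ2n : π ^ 2 ≤ π ^ 2 * (n:ℝ) := by nlinarith
  have habsk : |(k:ℝ)| = (n:ℝ) := by
    simp [hn, Nat.cast_natAbs, Int.cast_abs]
  have hsinh : (Real.sinh (π ^ 2 * (k:ℝ) / r)) ^ 2
      = (Real.sinh (π ^ 2 * (n:ℝ) / r)) ^ 2 := by
    rw [← sq_abs (Real.sinh (π ^ 2 * (k:ℝ) / r)), Real.abs_sinh, abs_div,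
      abs_of_pos hr, abs_mul, abs_of_pos (by positivity : (0:ℝ) < π ^ 2), habsk]
  rw [hsinh]
  have hu : 0 ≤ π * x / (2 * r) := by positivity
  have hv : 1 ≤ π ^ 2 * (n:ℝ) / r := by
    rw [le_div_iff₀ hr]; nlinarith
  have main := frac_bound (w := π * (x - 2 * π * (k:ℝ)) / (2 * r)) hu hv
  refine main.trans ?_
  have hRHS : 64 * Real.exp (2 * π ^ 2) * Real.exp (-(2 * π / r) * (π - x)) *
      Real.exp (-(4 * π ^ 2)) ^ n
      = 64 * Real.exp (2 * π ^ 2 + -(2 * π / r) * (π - x) + (n:ℝ) * -(4 * π ^ 2)) := by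
    rw [← Real.exp_nat_mul, mul_assoc, mul_assoc, ← Real.exp_add, ← Real.exp_add, add_assoc]
  rw [hRHS]
  have key : ∀ a : ℝ, a ≤ 0 → a / r ≤ a := by
    intro a ha; rw [div_le_iff₀ hr]; nlinarith
  have hC : 2 * π ^ 2 - 4 * π ^ 2 * (n:ℝ) ≤ 0 := by nlinarith
  have h3 := key (2 * π ^ 2 - 4 * π ^ 2 * (n:ℝ)) hC
  have hexp : 2 * (π * x / (2 * r) - π ^ 2 * (n:ℝ) / r - |π * (x - 2 * π * (k:ℝ)) / (2 * r)|)
      ≤ 2 * π ^ 2 + -(2 * π / r) * (π - x) + (n:ℝ) * -(4 * π ^ 2) := by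
    rcases lt_or_gt_of_ne hk with hkneg | hkpos
    · have hkR : (k:ℝ) < 0 := by exact_mod_cast hkneg
      have hkn : (k:ℝ) = -(n:ℝ) := by rw [← habsk, abs_of_neg hkR]; ring
      have hwabs : |π * (x - 2 * π * (k:ℝ)) / (2 * r)| = π * (x + 2 * π * (n:ℝ)) / (2 * r) := by
        rw [abs_of_nonneg, hkn]; · ring
        rw [hkn]
        have h0 : (0:ℝ) ≤ x - 2 * π * -(n:ℝ) := by nlinarith
        positivity
      rw [hwabs]
      have h1 : 2 * (π * x / (2 * r) - π ^ 2 * (n:ℝ) / r - π * (x + 2 * π * (n:ℝ)) / (2 * r))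
          = (2 * π ^ 2 - 4 * π ^ 2 * (n:ℝ) - 2 * π * x) / r + -(2 * π / r) * (π - x) := by
        field_simp; ring
      have h2 : (2 * π ^ 2 - 4 * π ^ 2 * (n:ℝ) - 2 * π * x) / r
          ≤ (2 * π ^ 2 - 4 * π ^ 2 * (n:ℝ)) / r :=
        (div_le_div_iff_of_pos_right hr).2 (by nlinarith)
      rw [h1]; linarith
    · have hkR : (0:ℝ) < (k:ℝ) := by exact_mod_cast hkpos
      have hkn : (k:ℝ) = (n:ℝ) := by rw [← habsk, abs_of_pos hkR]
      have hwabs : |π * (x - 2 * π * (k:ℝ)) / (2 * r)| = π * (2 * π * (n:ℝ) - x) / (2 * r) := by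
        rw [abs_of_nonpos, hkn]; · ring
        rw [hkn]
        apply div_nonpos_of_nonpos_of_nonneg ?_ (by positivity)
        nlinarith
      rw [hwabs]
      have h1 : 2 * (π * x / (2 * r) - π ^ 2 * (n:ℝ) / r - π * (2 * π * (n:ℝ) - x) / (2 * r))
          = (2 * π ^ 2 - 4 * π ^ 2 * (n:ℝ)) / r + -(2 * π / r) * (π - x) := by
        field_simp; ring
      rw [h1]; linarith
  exact mul_le_mul_of_nonneg_left (Real.exp_le_exp.2 hexp) (by norm_num)

lemma summable_q : Summable (fun k : {k : ℤ // k ≠ 0} => Real.exp (-(4 * π ^ 2)) ^ (k:ℤ).natAbs) := by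
  have hq0 : (0:ℝ) ≤ Real.exp (-(4 * π ^ 2)) := (Real.exp_pos _).le
  have hq1 : Real.exp (-(4 * π ^ 2)) < 1 := by
    rw [Real.exp_lt_one_iff]
    nlinarith [Real.pi_gt_three]
  have h : Summable (fun k : ℤ => Real.exp (-(4 * π ^ 2)) ^ k.natAbs) := by
    apply Summable.of_nat_of_neg <;>
      simpa using summable_geometric_of_lt_one hq0 hq1
  exact h.subtype _


/-- There is `c < ∞` with `A(r,x) ≤ (c/r²) exp(-(2π/r)(π-x))` for `0 < r ≤ 1`, `0 ≤ x ≤ π`. -/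
theorem stmt7 : ∃ c : ℝ, ∀ r : ℝ, 0 < r → r ≤ 1 → ∀ x : ℝ, 0 ≤ x → x ≤ π →
    Afun r x ≤ (c / r ^ 2) * Real.exp (-(2 * π / r) * (π - x)) := by
  set S : ℝ := ∑' k : {k : ℤ // k ≠ 0}, Real.exp (-(4 * π ^ 2)) ^ (k:ℤ).natAbs with hS
  have hS0 : 0 ≤ S := tsum_nonneg fun k => by positivity
  refine ⟨π ^ 2 / 4 * (64 * Real.exp (2 * π ^ 2)) * S, ?_⟩
  intro r hr hr1 x hx hxπ
  set D : ℝ := Real.exp (-(2 * π / r) * (π - x)) with hD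
  have hD0 : 0 < D := Real.exp_pos _
  -- bound the tsum
  set f : {k : ℤ // k ≠ 0} → ℝ := fun k =>
    (Real.cosh (π * x / (2 * r))) ^ 2 /
      ((Real.sinh (π ^ 2 * ((k : ℤ) : ℝ) / r)) ^ 2 *
        (Real.cosh (π * (x - 2 * π * ((k : ℤ) : ℝ)) / (2 * r))) ^ 2) with hf
  set g : {k : ℤ // k ≠ 0} → ℝ := fun k =>
    64 * Real.exp (2 * π ^ 2) * D * Real.exp (-(4 * π ^ 2)) ^ (k:ℤ).natAbs with hg
  have hfg : ∀ k, f k ≤ g k := fun k => term_bound hr hr1 hx hxπ k.2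
  have hgsum : Summable g := summable_q.mul_left _
  have hf0 : ∀ k, 0 ≤ f k := fun k => by
    apply div_nonneg (by positivity) (by positivity)
  have hfsum : Summable f :=
    Summable.of_norm_bounded hgsum fun k => by
      rw [Real.norm_eq_abs, abs_of_nonneg (hf0 k)]; exact hfg k
  have htsum : (∑' k, f k) ≤ 64 * Real.exp (2 * π ^ 2) * D * S := by
    calc (∑' k, f k) ≤ ∑' k, g k := Summable.tsum_le_tsum hfg hfsum hgsum
      _ = 64 * Real.exp (2 * π ^ 2) * D * S := tsum_mul_left
  have hr2 : (0:ℝ) < r ^ 2 := by positivity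
  calc Afun r x = (π ^ 2 / (4 * r ^ 2)) * ∑' k, f k := rfl
    _ ≤ (π ^ 2 / (4 * r ^ 2)) * (64 * Real.exp (2 * π ^ 2) * D * S) := by
        apply mul_le_mul_of_nonneg_left htsum (by positivity)
    _ = (π ^ 2 / 4 * (64 * Real.exp (2 * π ^ 2)) * S / r ^ 2) * D := by
        field_simp
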